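/- Let d2 > 0, y⋆ > 0, α ∈ (0, 1) and set d1 = 0. Consider the closed-loop system on the half-plane {(x1, x2) : x2 > 0} given by dx1/dτ = 1 - x2·u(x2), dx2/dτ = -d2·x2 + x1·u(x2), with the static nonlinear voltage feedback u(x2) = (1/y⋆)·(x2/y⋆)^α. Then the point x⋆ := (d2·y⋆², y⋆) is an asymptotically stable equilibrium: it is an equilibrium, it is Lyapunov stable (for every ε > 0 there is δ > 0 such that every solution starting within distance δ of x⋆ stays within distance ε for all forward time), and there is a neighborhood of x⋆ from which every solution converges to x⋆ as τ → ∞. -/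

import Mathlib

open Real Set
set_option linter.unusedSectionVars false
set_option maxHeartbeats 1000000
namespace BoostIDA
noncomputable section
variable (d2 y α : ℝ)

def Gp (z : ℝ) : ℝ := z - y ^ (1+α) * z ^ (-α)
def Gpp (z : ℝ) : ℝ := 1 + α * y ^ (1+α) * z ^ (-α-1)
def Gfun (z : ℝ) : ℝ := z^2/2 - y ^ (1+α) * z ^ (1-α)/(1-α) - (y^2/2 - y^2/(1-α))
def uu (z : ℝ) : ℝ := z ^ α / y ^ (1+α)
def hh (z : ℝ) : ℝ := -d2*z + d2*y^2 * uu y α z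

section Ineq
variable {d2 y α : ℝ} (hd2 : 0 < d2) (hy : 0 < y) (hα0 : 0 < α) (hα1 : α < 1)
include hy hα0 hα1

lemma monoOn {s : Set ℝ} (hs : Convex ℝ s) {f f' : ℝ → ℝ}
    (hd : ∀ x ∈ s, HasDerivAt f (f' x) x) (h0 : ∀ x ∈ s, 0 ≤ f' x) : MonotoneOn f s := by
  refine monotoneOn_of_deriv_nonneg hs
    (fun x hx => (hd x hx).continuousAt.continuousWithinAt)
    (fun x hx => ((hd x (interior_subset hx)).differentiableAt).differentiableWithinAt)
    (fun x hx => ?_)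
  rw [(hd x (interior_subset hx)).deriv]; exact h0 x (interior_subset hx)

lemma antiOn {s : Set ℝ} (hs : Convex ℝ s) {f f' : ℝ → ℝ}
    (hd : ∀ x ∈ s, HasDerivAt f (f' x) x) (h0 : ∀ x ∈ s, f' x ≤ 0) : AntitoneOn f s := by
  refine antitoneOn_of_deriv_nonpos hs
    (fun x hx => (hd x hx).continuousAt.continuousWithinAt)
    (fun x hx => ((hd x (interior_subset hx)).differentiableAt).differentiableWithinAt)
    (fun x hx => ?_)
  rw [(hd x (interior_subset hx)).deriv]; exact h0 x (interior_subset hx)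

lemma hasDerivAt_Gp {z : ℝ} (hz : 0 < z) :
    HasDerivAt (Gp y α) (Gpp y α z) z := by
  have h1 : HasDerivAt (fun z : ℝ => z ^ (-α)) (-α * z ^ (-α-1)) z :=
    Real.hasDerivAt_rpow_const (Or.inl hz.ne')
  have h2 : HasDerivAt (fun z : ℝ => z - y ^ (1+α) * z ^ (-α))
      (1 - y ^ (1+α) * (-α * z ^ (-α-1))) z :=
    (hasDerivAt_id z).sub ((h1.const_mul (y ^ (1+α))))
  convert h2 using 1
  · rfl
  unfold Gpp; ring

lemma hasDerivAt_Gfun {z : ℝ} (hz : 0 < z) :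
    HasDerivAt (Gfun y α) (Gp y α z) z := by
  have h1 : HasDerivAt (fun z : ℝ => z ^ (1-α)) ((1-α) * z ^ (1-α-1)) z :=
    Real.hasDerivAt_rpow_const (Or.inl hz.ne')
  have h2 : HasDerivAt (fun z : ℝ => z^2/2 - y ^ (1+α) * z ^ (1-α)/(1-α) - (y^2/2 - y^2/(1-α)))
      (z*2/2 - y ^ (1+α) * ((1-α) * z ^ (1-α-1))/(1-α) - 0) z := by
    have : HasDerivAt (fun z : ℝ => z^2) (2*z^(2-1)) z := hasDerivAt_pow 2 z
    exact (((this.div_const 2).sub (((h1.const_mul (y ^ (1+α)))).div_const (1-α))).sub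
      (hasDerivAt_const _ _)).congr_deriv (by push_cast; ring)
  convert h2 using 1
  · rfl
  have hβ : (1:ℝ) - α ≠ 0 := by linarith
  unfold Gp
  have : z ^ (1-α-1) = z ^ (-α) := by norm_num
  rw [this]
  field_simp
  ring

lemma Gpp_ge_one {z : ℝ} (hz : 0 < z) : 1 ≤ Gpp y α z := by
  have : 0 ≤ α * y ^ (1+α) * z ^ (-α-1) := by positivity
  unfold Gpp; linarith

lemma Gpp_le_five {z : ℝ} (hz : y/2 ≤ z) : Gpp y α z ≤ 5 := by
  have hz0 : 0 < z := lt_of_lt_of_le (by linarith) hz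
  have h1 : (y/2) ^ (α+1) ≤ z ^ (α+1) :=
    Real.rpow_le_rpow (by linarith) hz (by linarith)
  have h2 : z ^ (-α-1) = (z ^ (α+1))⁻¹ := by
    rw [show -α-1 = -(α+1) by ring, Real.rpow_neg hz0.le]
  have h3 : (y/2) ^ (α+1) = y ^ (α+1) * (1/2 : ℝ) ^ (α+1) := by
    rw [show y/2 = y * (1/2 : ℝ) by ring, Real.mul_rpow hy.le (by norm_num)]
  have h4 : ((1:ℝ)/2) ^ ((2:ℕ):ℝ) ≤ (1/2 : ℝ) ^ (α+1) :=
    Real.rpow_le_rpow_of_exponent_ge (by norm_num) (by norm_num) (by push_cast; linarith)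
  have h5 : ((1:ℝ)/2) ^ ((2:ℕ):ℝ) = 1/4 := by
    rw [Real.rpow_natCast]; norm_num
  have hy4 : y ^ (α+1) / 4 ≤ z ^ (α+1) := by nlinarith [Real.rpow_pos_of_pos hy (α+1)]
  have h6 : α * y ^ (1+α) * z ^ (-α-1) ≤ 4 := by
    rw [h2, show (1:ℝ)+α = α+1 by ring]
    rw [mul_inv_le_iff₀ (Real.rpow_pos_of_pos hz0 (α+1))]
    nlinarith [Real.rpow_pos_of_pos hy (α+1), Real.rpow_pos_of_pos hz0 (α+1)]
  unfold Gpp; linarith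

lemma uu_lb {z : ℝ} (hz : y/2 ≤ z) : 1/(2*y) ≤ uu y α z := by
  have hz0 : 0 < z := lt_of_lt_of_le (by linarith) hz
  have h1 : (y/2) ^ α ≤ z ^ α := Real.rpow_le_rpow (by linarith) hz hα0.le
  have h3 : (y/2) ^ α = y ^ α * (1/2 : ℝ) ^ α := by
    rw [show y/2 = y * (1/2 : ℝ) by ring, Real.mul_rpow hy.le (by norm_num)]
  have h4 : (1/2 : ℝ) ^ ((1:ℕ):ℝ) ≤ (1/2 : ℝ) ^ α :=
    Real.rpow_le_rpow_of_exponent_ge (by norm_num) (by norm_num) (by push_cast; linarith)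
  have h5 : (1/2 : ℝ) ^ ((1:ℕ):ℝ) = 1/2 := by rw [Real.rpow_natCast]; norm_num
  have hsplit : y ^ (1+α) = y * y ^ α := by
    rw [Real.rpow_add hy, Real.rpow_one]
  have hypos : 0 < y ^ α := Real.rpow_pos_of_pos hy α
  have h6 : y ^ α / 2 ≤ z ^ α := by nlinarith
  rw [uu, hsplit, div_le_div_iff₀ (by positivity) (by positivity)]
  nlinarith

lemma uu_ub {z : ℝ} (hz0 : 0 < z) (hz : z ≤ 2*y) : uu y α z ≤ 2/y := by
  have h1 : z ^ α ≤ (2*y) ^ α := Real.rpow_le_rpow hz0.le hz hα0.le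
  have h3 : (2*y) ^ α = (2:ℝ) ^ α * y ^ α := Real.mul_rpow (by norm_num) hy.le
  have h4 : (2:ℝ) ^ α ≤ (2:ℝ) ^ ((1:ℕ):ℝ) :=
    Real.rpow_le_rpow_of_exponent_le (by norm_num) (by push_cast; linarith)
  have h5 : (2:ℝ) ^ ((1:ℕ):ℝ) = 2 := by rw [Real.rpow_natCast]; norm_num
  have hsplit : y ^ (1+α) = y * y ^ α := by rw [Real.rpow_add hy, Real.rpow_one]
  have hypos : 0 < y ^ α := Real.rpow_pos_of_pos hy α
  have h6 : z ^ α ≤ 2 * y ^ α := by nlinarith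
  rw [uu, hsplit, div_le_div_iff₀ (by positivity) (by positivity)]
  nlinarith

lemma Gp_at_y : Gp y α y = 0 := by
  unfold Gp
  rw [← Real.rpow_add hy]
  norm_num

lemma Gfun_at_y : Gfun y α y = 0 := by
  have h : y ^ (1+α) * y ^ (1-α) = y^2 := by
    rw [← Real.rpow_add hy, show (1:ℝ)+α+(1-α) = ((2:ℕ):ℝ) by push_cast; ring,
      Real.rpow_natCast]
  have hβ : (1:ℝ) - α ≠ 0 := by linarith
  unfold Gfun
  rw [h]
  ring

/-- the key structural identity: 1 - z u = - Gp u -/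
lemma key_id {z : ℝ} (hz : 0 < z) : 1 - z * uu y α z = -(Gp y α z * uu y α z) := by
  have hyp : (0:ℝ) < y ^ (1+α) := Real.rpow_pos_of_pos hy _
  have h1 : z * z ^ α = z ^ (1+α) := by
    rw [Real.rpow_add hz, Real.rpow_one]
  have h2 : z ^ (-α) * z ^ α = 1 := by
    rw [← Real.rpow_add hz]; norm_num
  unfold Gp uu
  field_simp
  nlinarith [h1, h2]

/-- factorization of hh -/
lemma hh_eq {z : ℝ} (hz : 0 < z) :
    hh d2 y α z = -d2 * z ^ α * (z ^ (1-α) - y ^ (1-α)) := by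
  have h1 : z ^ α * z ^ (1-α) = z := by
    rw [← Real.rpow_add hz]; norm_num
  have h2 : y ^ (1-α) * y ^ (1+α) = y^2 := by
    rw [← Real.rpow_add hy, show (1:ℝ)-α+(1+α) = ((2:ℕ):ℝ) by push_cast; ring,
      Real.rpow_natCast]
  have hyp : (0:ℝ) < y ^ (1+α) := Real.rpow_pos_of_pos hy _
  have hyp' : y ^ (1+α) ≠ 0 := hyp.ne'
  unfold hh uu
  field_simp
  linear_combination d2 * y ^ (1+α) * h1 - d2 * z ^ α * h2

/-- factorization of Gp -/
lemma Gp_eq {z : ℝ} (hz : 0 < z) :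
    Gp y α z = z ^ (-α) * (z ^ (1+α) - y ^ (1+α)) := by
  have h1 : z ^ (-α) * z ^ (1+α) = z := by
    rw [← Real.rpow_add hz]; norm_num
  unfold Gp
  rw [mul_sub, h1]
  ring

/-- G is bounded below by a quadratic (global on z > 0) -/
lemma phi_deriv {w : ℝ} (hw : 0 < w) :
    HasDerivAt (fun w => Gfun y α w - (w-y)^2/2) (y - y ^ (1+α) * w ^ (-α)) w := by
  have h1 := hasDerivAt_Gfun hy hα0 hα1 hw
  have h2 : HasDerivAt (fun w : ℝ => (w-y)^2/2) (w - y) w := by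
    have : HasDerivAt (fun w : ℝ => (w-y)^2) (2*(w-y)^(2-1)*1) w :=
      ((hasDerivAt_id w).sub_const y).pow 2
    exact (this.div_const 2).congr_deriv (by ring)
  exact (h1.sub h2).congr_deriv (by unfold Gp; ring)

lemma phi_deriv_nonneg {w : ℝ} (hw : y ≤ w) : 0 ≤ y - y ^ (1+α) * w ^ (-α) := by
  have hw0 : 0 < w := lt_of_lt_of_le hy hw
  have hwα : y ^ α ≤ w ^ α := Real.rpow_le_rpow hy.le hw hα0.le
  have hwαpos : (0:ℝ) < w ^ α := Real.rpow_pos_of_pos hw0 α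
  have : y ^ (1+α) * w ^ (-α) ≤ y := by
    rw [Real.rpow_neg hw0.le, Real.rpow_add hy, Real.rpow_one,
      mul_inv_le_iff₀ hwαpos]
    nlinarith
  linarith

lemma phi_deriv_nonpos {w : ℝ} (hw0 : 0 < w) (hw : w ≤ y) :
    y - y ^ (1+α) * w ^ (-α) ≤ 0 := by
  have hwα : w ^ α ≤ y ^ α := Real.rpow_le_rpow hw0.le hw hα0.le
  have hwαpos : (0:ℝ) < w ^ α := Real.rpow_pos_of_pos hw0 α
  have : y ≤ y ^ (1+α) * w ^ (-α) := by
    rw [Real.rpow_neg hw0.le, Real.rpow_add hy, Real.rpow_one,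
      le_mul_inv_iff₀ hwαpos]
    nlinarith
  linarith

lemma G_lower {z : ℝ} (hz : 0 < z) : (z-y)^2/2 ≤ Gfun y α z := by
  have hGy := Gfun_at_y hy hα0 hα1
  rcases le_total y z with hc | hc
  · have hmono : MonotoneOn (fun w => Gfun y α w - (w-y)^2/2) (Ici y) :=
      monoOn hy hα0 hα1 (convex_Ici y)
        (fun w hw => phi_deriv hy hα0 hα1 (lt_of_lt_of_le hy hw))
        (fun w hw => phi_deriv_nonneg hy hα0 hα1 hw)
    have := hmono (self_mem_Ici) hc hc
    simp only [hGy] at this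
    linarith
  · have hanti : AntitoneOn (fun w => Gfun y α w - (w-y)^2/2) (Ioc 0 y) :=
      antiOn hy hα0 hα1 (convex_Ioc 0 y)
        (fun w hw => phi_deriv hy hα0 hα1 hw.1)
        (fun w hw => phi_deriv_nonpos hy hα0 hα1 hw.1 hw.2)
    have := hanti ⟨hz, hc⟩ ⟨hy, le_refl y⟩ hc
    simp only [hGy] at this
    linarith

omit hy hα0 hα1 in
lemma abs_sub_le_of_uIcc {a b c : ℝ} (hx : a ∈ uIcc b c) : |a - b| ≤ |c - b| := by
  rcases le_total b c with h|h
  · rw [uIcc_of_le h] at hx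
    rw [abs_of_nonneg (by linarith [hx.1]), abs_of_nonneg (by linarith)]
    linarith [hx.2]
  · rw [uIcc_of_ge h] at hx
    rw [abs_of_nonpos (by linarith [hx.2]), abs_of_nonpos (by linarith)]
    linarith [hx.1]

lemma Gp_bound {z : ℝ} (hz : y/2 ≤ z) : |Gp y α z| ≤ 5 * |z - y| := by
  have key : ‖Gp y α z - Gp y α y‖ ≤ 5 * ‖z - y‖ :=
    Convex.norm_image_sub_le_of_norm_hasDerivWithin_le
      (f' := Gpp y α) (s := Ici (y/2))
      (fun x hx => (hasDerivAt_Gp hy hα0 hα1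
        (lt_of_lt_of_le (by linarith) (mem_Ici.mp hx))).hasDerivWithinAt)
      (fun x hx => by
        rw [Real.norm_eq_abs, abs_le]
        constructor
        · linarith [Gpp_ge_one hy hα0 hα1 (lt_of_lt_of_le (by linarith) (mem_Ici.mp hx))]
        · exact Gpp_le_five hy hα0 hα1 (mem_Ici.mp hx))
      (convex_Ici _) (mem_Ici.mpr (by linarith : y/2 ≤ y)) (mem_Ici.mpr hz)
  rw [Gp_at_y hy hα0 hα1, sub_zero, Real.norm_eq_abs, Real.norm_eq_abs] at key
  linarith

lemma G_upper {z : ℝ} (hz : y/2 ≤ z) : Gfun y α z ≤ 5 * (z-y)^2 := by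
  have hGy := Gfun_at_y hy hα0 hα1
  have hmem : ∀ x ∈ uIcc y z, y/2 ≤ x := by
    intro x hx
    rcases le_total y z with h|h
    · rw [uIcc_of_le h] at hx; linarith [hx.1]
    · rw [uIcc_of_ge h] at hx; linarith [hx.1]
  have key : ‖Gfun y α z - Gfun y α y‖ ≤ 5 * |z - y| * ‖z - y‖ :=
    Convex.norm_image_sub_le_of_norm_hasDerivWithin_le
      (f' := Gp y α) (s := uIcc y z)
      (fun x hx => (hasDerivAt_Gfun hy hα0 hα1
        (lt_of_lt_of_le (by linarith) (hmem x hx))).hasDerivWithinAt)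
      (fun x hx => by
        rw [Real.norm_eq_abs]
        calc |Gp y α x| ≤ 5 * |x - y| := Gp_bound hy hα0 hα1 (hmem x hx)
          _ ≤ 5 * |z - y| := by have := abs_sub_le_of_uIcc hx; linarith)
      (convex_uIcc _ _) left_mem_uIcc right_mem_uIcc
  rw [hGy, sub_zero, Real.norm_eq_abs, Real.norm_eq_abs] at key
  calc Gfun y α z ≤ |Gfun y α z| := le_abs_self _
    _ ≤ 5 * |z - y| * |z - y| := key
    _ = 5 * (z-y)^2 := by rw [mul_assoc, abs_mul_abs_self]; ring

include hd2 in
lemma Gph_bound {z : ℝ} (hzl : y/2 ≤ z) (hzu : z ≤ 2*y) :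
    Gp y α z * hh d2 y α z ≤ -(d2*(1-α)/4) * (z-y)^2 := by
  have hz0 : 0 < z := lt_of_lt_of_le (by linarith) hzl
  set cP := (y/2)^α with hcP
  set cQ := (1-α)*(2*y)^(-α) with hcQ
  have hcPpos : 0 < cP := Real.rpow_pos_of_pos (by linarith) α
  have hcQpos : 0 < cQ :=
    mul_pos (by linarith) (Real.rpow_pos_of_pos (by linarith) (-α))
  have monoP : MonotoneOn (fun w : ℝ => w^(1+α) - cP*w) (Ici (y/2)) := by
    apply monoOn hy hα0 hα1 (convex_Ici _) (f' := fun w => (1+α)*w^α - cP)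
    · intro w hw
      have hw0 : 0 < w := lt_of_lt_of_le (by linarith) hw
      have h1 : HasDerivAt (fun w:ℝ => w^(1+α)) ((1+α)*w^(1+α-1)) w :=
        Real.hasDerivAt_rpow_const (Or.inl hw0.ne')
      have he : w^(1+α-1) = w^α := by norm_num
      exact (h1.sub ((hasDerivAt_id w).const_mul cP)).congr_deriv (by rw [he]; ring)
    · intro w hw
      have hw0 : 0 < w := lt_of_lt_of_le (by linarith) hw
      have h1 : cP ≤ w^α := Real.rpow_le_rpow (by linarith) hw hα0.le
      have h2 : 0 < w^α := Real.rpow_pos_of_pos hw0 α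
      nlinarith
  have monoQ : MonotoneOn (fun w : ℝ => w^(1-α) - cQ*w) (Ioc 0 (2*y)) := by
    apply monoOn hy hα0 hα1 (convex_Ioc _ _) (f' := fun w => (1-α)*w^(-α) - cQ)
    · intro w hw
      have h1 : HasDerivAt (fun w:ℝ => w^(1-α)) ((1-α)*w^(1-α-1)) w :=
        Real.hasDerivAt_rpow_const (Or.inl hw.1.ne')
      have he : w^(1-α-1) = w^(-α) := by norm_num
      exact (h1.sub ((hasDerivAt_id w).const_mul cQ)).congr_deriv (by rw [he]; ring)
    · intro w hw
      have h1 : w ^ α ≤ (2*y)^α := Real.rpow_le_rpow hw.1.le hw.2 hα0.le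
      have h2 : (2*y)^(-α) ≤ w^(-α) := by
        rw [Real.rpow_neg (by linarith), Real.rpow_neg hw.1.le]
        exact inv_anti₀ (Real.rpow_pos_of_pos hw.1 α) h1
      nlinarith
  have hyI : y ∈ Ici (y/2) := mem_Ici.mpr (by linarith)
  have hzI : z ∈ Ici (y/2) := mem_Ici.mpr hzl
  have hyJ : y ∈ Ioc 0 (2*y) := ⟨hy, by linarith⟩
  have hzJ : z ∈ Ioc 0 (2*y) := ⟨hz0, hzu⟩
  have hPQ : cP * cQ * (z-y)^2 ≤ (z^(1+α) - y^(1+α)) * (z^(1-α) - y^(1-α)) := by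
    rcases le_total y z with hc|hc
    · have h1 := monoP hyI hzI hc
      have h2 := monoQ hyJ hzJ hc
      simp only at h1 h2
      have hP : cP*(z-y) ≤ z^(1+α) - y^(1+α) := by linarith
      have hQ : cQ*(z-y) ≤ z^(1-α) - y^(1-α) := by linarith
      have h0 : (0:ℝ) ≤ cQ*(z-y) := by nlinarith
      have h0' : (0:ℝ) ≤ z^(1+α) - y^(1+α) := le_trans (by nlinarith) hP
      calc cP * cQ * (z-y)^2 = (cP*(z-y)) * (cQ*(z-y)) := by ring
        _ ≤ (z^(1+α) - y^(1+α)) * (z^(1-α) - y^(1-α)) := mul_le_mul hP hQ h0 h0'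
    · have h1 := monoP hzI hyI hc
      have h2 := monoQ hzJ hyJ hc
      simp only at h1 h2
      have hP : z^(1+α) - y^(1+α) ≤ cP*(z-y) := by linarith
      have hQ : z^(1-α) - y^(1-α) ≤ cQ*(z-y) := by linarith
      have hp0 : cP*(z-y) ≤ 0 := by nlinarith
      have hq0 : cQ*(z-y) ≤ 0 := by nlinarith
      nlinarith [mul_nonneg (by linarith : (0:ℝ) ≤ cP*(z-y) - (z^(1+α) - y^(1+α)))
          (by linarith : (0:ℝ) ≤ -(z^(1-α) - y^(1-α))),
        mul_nonneg (by linarith : (0:ℝ) ≤ -(cP*(z-y)))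
          (by linarith : (0:ℝ) ≤ cQ*(z-y) - (z^(1-α) - y^(1-α)))]
  have hzz : z ^ (-α) * z ^ α = 1 := by
    rw [← Real.rpow_add hz0]; norm_num
  have hfact : Gp y α z * hh d2 y α z
      = -d2 * ((z^(1+α) - y^(1+α)) * (z^(1-α) - y^(1-α))) := by
    rw [Gp_eq hy hα0 hα1 hz0, hh_eq hy hα0 hα1 hz0]
    linear_combination (-(d2)*((z^(1+α)-y^(1+α))*(z^(1-α)-y^(1-α))))*hzz
  have hcPcQ : (1-α)/4 ≤ cP * cQ := by
    have he1 : cP * (2*y)^(-α) = ((1:ℝ)/4)^α := by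
      rw [hcP, Real.rpow_neg (by linarith : (0:ℝ) ≤ 2*y), ← div_eq_mul_inv,
        ← Real.div_rpow (by linarith : (0:ℝ) ≤ y/2) (by linarith : (0:ℝ) ≤ 2*y)]
      congr 1
      field_simp
      ring
    have h14 : (1/4:ℝ) ≤ ((1:ℝ)/4)^α := by
      calc (1/4:ℝ) = (1/4:ℝ)^((1:ℕ):ℝ) := by rw [Real.rpow_natCast]; norm_num
        _ ≤ ((1:ℝ)/4)^α :=
          Real.rpow_le_rpow_of_exponent_ge (by norm_num) (by norm_num)
            (by push_cast; linarith)
    calc (1-α)/4 = (1-α) * (1/4 : ℝ) := by ring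
      _ ≤ (1-α) * ((1:ℝ)/4)^α := by nlinarith
      _ = (1-α) * (cP * (2*y)^(-α)) := by rw [he1]
      _ = cP * cQ := by rw [hcQ]; ring
  rw [hfact]
  have hfin : (1-α)/4 * (z-y)^2 ≤ (z^(1+α) - y^(1+α)) * (z^(1-α) - y^(1-α)) := by
    nlinarith [sq_nonneg (z-y)]
  nlinarith [mul_le_mul_of_nonneg_left hfin hd2.le]

include hd2 in
lemma hh_bound {z : ℝ} (hzl : y/2 ≤ z) (hzu : z ≤ 2*y) :
    |hh d2 y α z| ≤ 4*d2 * |z - y| := by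
  have hz0 : 0 < z := lt_of_lt_of_le (by linarith) hzl
  set KQ := (1-α)*(y/2)^(-α) with hKQ
  have hKQ0 : 0 < KQ := mul_pos (by linarith) (Real.rpow_pos_of_pos (by linarith) (-α))
  have key : ‖z^(1-α) - y^(1-α)‖ ≤ KQ * ‖z - y‖ :=
    Convex.norm_image_sub_le_of_norm_hasDerivWithin_le
      (f' := fun w => (1-α)*w^(-α)) (s := Ici (y/2))
      (fun x hx => by
        have hx0 : 0 < x := lt_of_lt_of_le (by linarith) (mem_Ici.mp hx)
        have h1 : HasDerivAt (fun w:ℝ => w^(1-α)) ((1-α)*x^(1-α-1)) x :=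
          Real.hasDerivAt_rpow_const (Or.inl hx0.ne')
        have he : x^(1-α-1) = x^(-α) := by norm_num
        exact (h1.congr_deriv (by rw [he])).hasDerivWithinAt)
      (fun x hx => by
        have hx0 : 0 < x := lt_of_lt_of_le (by linarith) (mem_Ici.mp hx)
        have h1 : x ^ (-α) ≤ (y/2) ^ (-α) := by
          rw [Real.rpow_neg hx0.le, Real.rpow_neg (show (0:ℝ) ≤ y/2 by linarith)]
          exact inv_anti₀ (Real.rpow_pos_of_pos (by linarith) α)
            (Real.rpow_le_rpow (by linarith) (mem_Ici.mp hx) hα0.le)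
        have h2 : 0 < x ^ (-α) := Real.rpow_pos_of_pos hx0 (-α)
        show ‖(1-α)*x^(-α)‖ ≤ KQ
        rw [Real.norm_eq_abs, abs_of_nonneg (mul_nonneg (by linarith) h2.le)]
        nlinarith)
      (convex_Ici _) (mem_Ici.mpr (by linarith : y/2 ≤ y)) (mem_Ici.mpr hzl)
  have hQ : |z^(1-α) - y^(1-α)| ≤ KQ * |z - y| := by
    simpa [Real.norm_eq_abs] using key
  have hzαpos : 0 < z^α := Real.rpow_pos_of_pos hz0 α
  have habs : |hh d2 y α z| = d2 * z^α * |z^(1-α) - y^(1-α)| := by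
    rw [hh_eq hy hα0 hα1 hz0, abs_mul, abs_mul, abs_neg,
      abs_of_nonneg hd2.le, abs_of_nonneg hzαpos.le]
  have h4 : z^α * (y/2)^(-α) ≤ 4 := by
    have h1 : z^α ≤ (2*y)^α := Real.rpow_le_rpow hz0.le hzu hα0.le
    have h2 : (2*y)^α * (y/2)^(-α) = (4:ℝ)^α := by
      rw [Real.rpow_neg (by linarith : (0:ℝ) ≤ y/2), ← div_eq_mul_inv,
        ← Real.div_rpow (by linarith : (0:ℝ) ≤ 2*y) (by linarith : (0:ℝ) ≤ y/2)]
      congr 1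
      field_simp
      ring
    have h3 : (4:ℝ)^α ≤ 4 := by
      calc (4:ℝ)^α ≤ (4:ℝ)^((1:ℕ):ℝ) :=
          Real.rpow_le_rpow_of_exponent_le (by norm_num) (by push_cast; linarith)
        _ = 4 := by rw [Real.rpow_natCast]; norm_num
    have hp : 0 < (y/2)^(-α) := Real.rpow_pos_of_pos (by linarith) (-α)
    nlinarith [mul_le_mul_of_nonneg_right h1 hp.le]
  have hKQz : z^α * KQ ≤ 4 := by
    rw [hKQ]
    nlinarith [Real.rpow_pos_of_pos (by linarith : (0:ℝ) < y/2) (-α), hzαpos]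
  rw [habs]
  calc d2 * z^α * |z^(1-α) - y^(1-α)| ≤ d2 * z^α * (KQ * |z-y|) := by
        apply mul_le_mul_of_nonneg_left hQ (by positivity)
    _ ≤ 4*d2 * |z-y| := by
        have := mul_le_mul_of_nonneg_right hKQz (mul_nonneg hd2.le (abs_nonneg (z-y)))
        nlinarith [this]

lemma uu_eq {z : ℝ} (hz : 0 < z) : (1/y) * (z/y) ^ α = uu y α z := by
  have hyα : (0:ℝ) < y ^ α := Real.rpow_pos_of_pos hy α
  rw [Real.div_rpow hz.le hy.le, uu, Real.rpow_add hy, Real.rpow_one]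
  field_simp

end Ineq


/-- tuning gain -/
def cc : ℝ := min ((d2*(1-α)*y/8)/(50 + 400*d2^2*y^2)) (1/10)
def c1y : ℝ := min (d2*(1-α)*y/8) (cc d2 y α/4)
def lam : ℝ := c1y d2 y α/(6*y)

def Wexpr (e z : ℝ) : ℝ := e^2/2 + Gfun y α z - cc d2 y α * e * Gp y α z

def Wfun (x : ℝ × ℝ) : ℝ := Wexpr d2 y α (x.1 - d2*y^2) x.2

def DWfun (x : ℝ × ℝ) : ℝ :=
  (x.1 - d2*y^2) * (1 - x.2*uu y α x.2) + Gp y α x.2 * (-d2*x.2 + x.1*uu y α x.2)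
    - cc d2 y α * ((1 - x.2*uu y α x.2) * Gp y α x.2
        + (x.1 - d2*y^2) * Gpp y α x.2 * (-d2*x.2 + x.1*uu y α x.2))

section Main
variable {d2 y α : ℝ} (hd2 : 0 < d2) (hy : 0 < y) (hα0 : 0 < α) (hα1 : α < 1)
include hd2 hy hα0 hα1

lemma cc_pos : 0 < cc d2 y α := by
  apply lt_min _ (by norm_num)
  apply div_pos _ (by nlinarith)
  have h1 : (0:ℝ) < 1 - α := by linarith
  positivity

lemma cc_le : cc d2 y α ≤ 1/10 := min_le_right _ _

lemma cc_bound : cc d2 y α * (50 + 400*d2^2*y^2) ≤ d2*(1-α)*y/8 := by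
  have h1 : cc d2 y α ≤ (d2*(1-α)*y/8)/(50 + 400*d2^2*y^2) := min_le_left _ _
  have h2 : (0:ℝ) < 50 + 400*d2^2*y^2 := by nlinarith
  rw [le_div_iff₀ h2] at h1
  linarith

lemma c1y_pos : 0 < c1y d2 y α := by
  have h1 : (0:ℝ) < 1 - α := by linarith
  exact lt_min (by positivity) (by linarith [cc_pos hd2 hy hα0 hα1])

lemma lam_pos : 0 < lam d2 y α :=
  div_pos (c1y_pos hd2 hy hα0 hα1) (by linarith)

/-- quadratic bounds for the Lyapunov function on the strip -/
lemma W_bounds (e z : ℝ) (hzl : y/2 ≤ z) (hzu : z ≤ 2*y) :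
    (1/4)*(e^2 + (z-y)^2) ≤ Wexpr d2 y α e z ∧
      Wexpr d2 y α e z ≤ 6*(e^2 + (z-y)^2) := by
  have hz0 : 0 < z := lt_of_lt_of_le (by linarith) hzl
  have hGl : (z-y)^2/2 ≤ Gfun y α z := G_lower hy hα0 hα1 hz0
  have hGu : Gfun y α z ≤ 5*(z-y)^2 := G_upper hy hα0 hα1 hzl
  have hgp : |Gp y α z| ≤ 5*|z - y| := Gp_bound hy hα0 hα1 hzl
  have hccle := cc_le hd2 hy hα0 hα1
  have hccpos := cc_pos hd2 hy hα0 hα1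
  have hcross : |cc d2 y α * e * Gp y α z| ≤ (e^2 + (z-y)^2)/4 := by
    rw [abs_mul, abs_mul, abs_of_pos hccpos]
    have h2 : cc d2 y α * |e| * |Gp y α z| ≤ (1/10) * |e| * (5*|z-y|) := by
      apply mul_le_mul _ hgp (abs_nonneg _) (by positivity)
      exact mul_le_mul_of_nonneg_right hccle (abs_nonneg _)
    have h3 : (1/10) * |e| * (5*|z-y|) ≤ (e^2 + (z-y)^2)/4 := by
      nlinarith [sq_nonneg (|e| - |z-y|), sq_abs e, sq_abs (z-y)]
    linarith
  have hc1 : -((e^2 + (z-y)^2)/4) ≤ cc d2 y α * e * Gp y α z := by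
    linarith [neg_abs_le (cc d2 y α * e * Gp y α z)]
  have hc2 : cc d2 y α * e * Gp y α z ≤ (e^2 + (z-y)^2)/4 :=
    (le_abs_self _).trans hcross
  unfold Wexpr
  constructor
  · nlinarith
  · nlinarith

/-- the master decay inequality, in scalar form -/
lemma DW_le (e z : ℝ) (hzl : y/2 ≤ z) (hzu : z ≤ 2*y) :
    e * (1 - z*uu y α z) + Gp y α z * (-d2*z + (e + d2*y^2)*uu y α z)
      - cc d2 y α * ((1 - z*uu y α z) * Gp y α z
          + e * Gpp y α z * (-d2*z + (e + d2*y^2)*uu y α z))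
      ≤ -(lam d2 y α) * Wexpr d2 y α e z := by
  have hz0 : 0 < z := lt_of_lt_of_le (by linarith) hzl
  have hccpos : 0 < cc d2 y α := cc_pos hd2 hy hα0 hα1
  have heq : 1 - z * uu y α z = -(Gp y α z * uu y α z) := key_id hy hα0 hα1 hz0
  have hDW : e * (1 - z*uu y α z) + Gp y α z * (-d2*z + (e + d2*y^2)*uu y α z)
      - cc d2 y α * ((1 - z*uu y α z) * Gp y α z
          + e * Gpp y α z * (-d2*z + (e + d2*y^2)*uu y α z))
      = Gp y α z * hh d2 y α z + cc d2 y α * uu y α z * (Gp y α z)^2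
        - cc d2 y α * e * Gpp y α z * hh d2 y α z
        - cc d2 y α * uu y α z * Gpp y α z * e^2 := by
    rw [hh]
    linear_combination (e - cc d2 y α * Gp y α z) * heq
  rw [hDW]
  have hT1 : Gp y α z * hh d2 y α z ≤ -(d2*(1-α)/4)*(z-y)^2 :=
    Gph_bound hd2 hy hα0 hα1 hzl hzu
  have hgp : |Gp y α z| ≤ 5*|z - y| := Gp_bound hy hα0 hα1 hzl
  have hgp2 : (Gp y α z)^2 ≤ 25*(z-y)^2 := by
    nlinarith [mul_self_le_mul_self (abs_nonneg (Gp y α z)) hgp,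
      abs_mul_abs_self (Gp y α z), abs_mul_abs_self (z-y), abs_nonneg (z-y)]
  have hhvb : |hh d2 y α z| ≤ 4*d2*|z - y| := hh_bound hd2 hy hα0 hα1 hzl hzu
  have hgpp1 : 1 ≤ Gpp y α z := Gpp_ge_one hy hα0 hα1 hz0
  have hgpp5 : Gpp y α z ≤ 5 := Gpp_le_five hy hα0 hα1 hzl
  have hUlb : 1/(2*y) ≤ uu y α z := uu_lb hy hα0 hα1 hzl
  have hUub : uu y α z ≤ 2/y := uu_ub hy hα0 hα1 hz0 hzu
  have hyU1 : 1 ≤ 2*y*uu y α z := by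
    rw [div_le_iff₀ (by linarith : (0:ℝ) < 2*y)] at hUlb
    linarith
  have hyU2 : y*uu y α z ≤ 2 := by
    rw [le_div_iff₀ hy] at hUub
    linarith
  have hUpos : 0 < uu y α z := by
    have : (0:ℝ) < 1/(2*y) := by positivity
    linarith
  have hT2 : y * (cc d2 y α * uu y α z * (Gp y α z)^2) ≤ 50*cc d2 y α*(z-y)^2 := by
    have h1 : y*uu y α z*(Gp y α z)^2 ≤ 50*(z-y)^2 := by nlinarith [sq_nonneg (Gp y α z)]
    nlinarith [sq_nonneg (Gp y α z), mul_nonneg hy.le hUpos.le]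
  have hT3 : y * (-(cc d2 y α * e * Gpp y α z * hh d2 y α z))
      ≤ cc d2 y α*e^2/4 + 400*cc d2 y α*d2^2*y^2*(z-y)^2 := by
    have h1 : |e * Gpp y α z * hh d2 y α z| ≤ |e| * 5 * (4*d2*|z-y|) := by
      rw [abs_mul, abs_mul, abs_of_pos (show (0:ℝ) < Gpp y α z by linarith)]
      apply mul_le_mul _ hhvb (abs_nonneg _) (by positivity)
      nlinarith [abs_nonneg e]
    have h2 : -(e * Gpp y α z * hh d2 y α z) ≤ 20*d2*(|e| * |z - y|) := by
      calc -(e * Gpp y α z * hh d2 y α z) ≤ |e * Gpp y α z * hh d2 y α z| := neg_le_abs _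
        _ ≤ |e| * 5 * (4*d2*|z-y|) := h1
        _ = 20*d2*(|e| * |z - y|) := by ring
    have hamgm : 20*d2*y*(|e| * |z - y|) ≤ e^2/4 + 400*d2^2*y^2*(z-y)^2 := by
      have hq : (20*d2*y*|z - y|)^2 = 400*d2^2*y^2*(z-y)^2 := by
        rw [show (20*d2*y*|z - y|)^2 = 400*d2^2*y^2*|z - y|^2 by ring, sq_abs]
      nlinarith [sq_nonneg (|e|/2 - 20*d2*y*|z - y|), sq_abs e, hq]
    have h3 : y*(-(e * Gpp y α z * hh d2 y α z)) ≤ 20*d2*y*(|e| * |z - y|) := by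
      nlinarith [mul_le_mul_of_nonneg_left h2 hy.le]
    nlinarith [mul_le_mul_of_nonneg_left (le_trans h3 hamgm) hccpos.le]
  have hT4 : y * (-(cc d2 y α * uu y α z * Gpp y α z * e^2)) ≤ -(cc d2 y α*e^2/2) := by
    have h1 : 1/2 ≤ y*uu y α z := by linarith
    have h2 : y*uu y α z ≤ y*uu y α z*Gpp y α z := by nlinarith [mul_nonneg hy.le hUpos.le]
    nlinarith [sq_nonneg e, mul_le_mul_of_nonneg_left (le_trans h1 h2)
      (mul_nonneg hccpos.le (sq_nonneg e))]
  have hccb := cc_bound hd2 hy hα0 hα1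
  have hscaled : y * (Gp y α z * hh d2 y α z + cc d2 y α * uu y α z * (Gp y α z)^2
        - cc d2 y α * e * Gpp y α z * hh d2 y α z
        - cc d2 y α * uu y α z * Gpp y α z * e^2)
      ≤ -((d2*(1-α)*y/8)*(z-y)^2) - cc d2 y α*e^2/4 := by
    have hT1y : y*(Gp y α z * hh d2 y α z) ≤ -(d2*(1-α)/4)*(z-y)^2*y := by
      nlinarith [mul_le_mul_of_nonneg_left hT1 hy.le]
    linarith [mul_le_mul_of_nonneg_right hccb (sq_nonneg (z-y)), hT1y, hT2, hT3, hT4]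
  have hWub := (W_bounds hd2 hy hα0 hα1 e z hzl hzu).2
  have hWlb := (W_bounds hd2 hy hα0 hα1 e z hzl hzu).1
  have hc1y := c1y_pos hd2 hy hα0 hα1
  have hmin1 : c1y d2 y α ≤ d2*(1-α)*y/8 := min_le_left _ _
  have hmin2 : c1y d2 y α ≤ cc d2 y α/4 := min_le_right _ _
  have hfin : y * (Gp y α z * hh d2 y α z + cc d2 y α * uu y α z * (Gp y α z)^2
        - cc d2 y α * e * Gpp y α z * hh d2 y α z
        - cc d2 y α * uu y α z * Gpp y α z * e^2)
      ≤ -(c1y d2 y α) * (e^2 + (z-y)^2) := by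
    linarith [mul_le_mul_of_nonneg_right hmin1 (sq_nonneg (z-y)),
      mul_le_mul_of_nonneg_right hmin2 (sq_nonneg e), hscaled]
  have hfin2 : -(c1y d2 y α) * (e^2 + (z-y)^2) ≤ y * (-(lam d2 y α) * Wexpr d2 y α e z) := by
    have hl : y * (-(lam d2 y α) * Wexpr d2 y α e z)
        = -(c1y d2 y α/6) * Wexpr d2 y α e z := by
      rw [lam]; field_simp
    rw [hl]
    linarith [mul_le_mul_of_nonneg_left hWub (by positivity : (0:ℝ) ≤ c1y d2 y α/6)]
  have hres := le_trans hfin hfin2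
  exact le_of_mul_le_mul_left (by linarith [hres]) hy

/-- value of DWfun vs scalar form -/
lemma DWfun_eq (x : ℝ × ℝ) :
    DWfun d2 y α x = (x.1 - d2*y^2) * (1 - x.2*uu y α x.2)
      + Gp y α x.2 * (-d2*x.2 + ((x.1 - d2*y^2) + d2*y^2)*uu y α x.2)
      - cc d2 y α * ((1 - x.2*uu y α x.2) * Gp y α x.2
          + (x.1 - d2*y^2) * Gpp y α x.2 * (-d2*x.2 + ((x.1 - d2*y^2) + d2*y^2)*uu y α x.2)) := by
  rw [DWfun]; ring

lemma DWfun_le (x : ℝ × ℝ) (hzl : y/2 ≤ x.2) (hzu : x.2 ≤ 2*y) :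
    DWfun d2 y α x ≤ -(lam d2 y α) * Wfun d2 y α x := by
  rw [DWfun_eq hd2 hy hα0 hα1, Wfun]
  exact DW_le hd2 hy hα0 hα1 (x.1 - d2*y^2) x.2 hzl hzu

/-- chain rule for W along a solution -/
lemma hasDerivAt_W_comp (χ : ℝ → ℝ × ℝ) (τ : ℝ) (v : ℝ × ℝ)
    (hχ : HasDerivAt χ v τ) (hpos : 0 < (χ τ).2) :
    HasDerivAt (fun t => Wfun d2 y α (χ t))
      (((χ τ).1 - d2*y^2) * v.1 + Gp y α (χ τ).2 * v.2
        - cc d2 y α * (v.1 * Gp y α (χ τ).2 + ((χ τ).1 - d2*y^2) * Gpp y α (χ τ).2 * v.2)) τ := by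
  have hp : HasDerivAt (fun t => (χ t).1) v.1 τ := by
    simpa using (hχ.hasFDerivAt.fst).hasDerivAt
  have hq : HasDerivAt (fun t => (χ t).2) v.2 τ := by
    simpa using (hχ.hasFDerivAt.snd).hasDerivAt
  have h1 : HasDerivAt (fun t => ((χ t).1 - d2*y^2)^2/2) (((χ τ).1 - d2*y^2) * v.1) τ := by
    have := ((hp.sub_const (d2*y^2)).pow 2).div_const 2
    exact this.congr_deriv (by push_cast; ring)
  have h2 : HasDerivAt (fun t => Gfun y α ((χ t).2)) (Gp y α (χ τ).2 * v.2) τ :=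
    by have := (hasDerivAt_Gfun hy hα0 hα1 hpos).comp τ hq; exact this
  have h3 : HasDerivAt (fun t => Gp y α ((χ t).2)) (Gpp y α (χ τ).2 * v.2) τ :=
    by have := (hasDerivAt_Gp hy hα0 hα1 hpos).comp τ hq; exact this
  have h4 : HasDerivAt (fun t => cc d2 y α * (((χ t).1 - d2*y^2) * Gp y α ((χ t).2)))
      (cc d2 y α * (v.1 * Gp y α (χ τ).2
        + ((χ τ).1 - d2*y^2) * (Gpp y α (χ τ).2 * v.2))) τ :=
    ((hp.sub_const (d2*y^2)).mul h3).const_mul _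
  have h5 := (h1.add h2).sub h4
  have hfun : (fun t => ((χ t).1 - d2*y^2)^2/2 + Gfun y α ((χ t).2)
      - cc d2 y α * (((χ t).1 - d2*y^2) * Gp y α ((χ t).2)))
      = (fun t => Wfun d2 y α (χ t)) := by
    funext t; rw [Wfun, Wexpr]; ring
  rw [← hfun]
  exact h5.congr_deriv (by ring)

end Main

section ODE
variable {d2 y α : ℝ} (hd2 : 0 < d2) (hy : 0 < y) (hα0 : 0 < α) (hα1 : α < 1)
include hd2 hy hα0 hα1

omit hd2 hy hα0 hα1 in
lemma prod_norm_sq_le (w : ℝ × ℝ) : ‖w‖^2 ≤ w.1^2 + w.2^2 := by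
  rcases le_total ‖w.1‖ ‖w.2‖ with h|h
  · rw [Prod.norm_def, max_eq_right h, Real.norm_eq_abs, sq_abs]
    nlinarith [sq_nonneg w.1]
  · rw [Prod.norm_def, max_eq_left h, Real.norm_eq_abs, sq_abs]
    nlinarith [sq_nonneg w.2]

omit hd2 hy hα0 hα1 in
lemma prod_comp_le (w : ℝ × ℝ) : |w.1| ≤ ‖w‖ ∧ |w.2| ≤ ‖w‖ := by
  constructor
  · rw [← Real.norm_eq_abs]; exact norm_fst_le w
  · rw [← Real.norm_eq_abs]; exact norm_snd_le w

/-- the trapping lemma: solutions starting close to the equilibrium stay within ρ -/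
lemma trap (χ : ℝ → ℝ × ℝ)
    (hχ : ∀ τ : ℝ, 0 ≤ τ → HasDerivAt χ (1 - (χ τ).2 * uu y α (χ τ).2,
        -d2*(χ τ).2 + (χ τ).1 * uu y α (χ τ).2) τ ∧ 0 < (χ τ).2)
    {ρ : ℝ} (hρ0 : 0 < ρ) (hρy : ρ ≤ y/2)
    (h0 : ‖χ 0 - (d2*y^2, y)‖ < ρ/10) :
    ∀ τ : ℝ, 0 ≤ τ → ‖χ τ - (d2*y^2, y)‖ < ρ := by
  have hlam := lam_pos hd2 hy hα0 hα1
  intro τ0 hτ0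
  by_contra hbad
  push_neg at hbad
  set E := {τ : ℝ | 0 ≤ τ ∧ ρ ≤ ‖χ τ - (d2*y^2, y)‖} with hE
  have hEne : E.Nonempty := ⟨τ0, hτ0, hbad⟩
  have hEbdd : BddBelow E := ⟨0, fun x hx => hx.1⟩
  have hcont : ContinuousOn (fun τ => ‖χ τ - (d2*y^2, y)‖) (Ici 0) := fun t ht =>
    (((hχ t ht).1.continuousAt.continuousWithinAt).sub continuousWithinAt_const).norm
  have hEclosed : IsClosed E := by
    have hrw : E = Ici 0 ∩ (fun τ => ‖χ τ - (d2*y^2, y)‖) ⁻¹' (Ici ρ) := rfl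
    rw [hrw]
    exact ContinuousOn.preimage_isClosed_of_isClosed hcont isClosed_Ici isClosed_Ici
  have ht0E : sInf E ∈ E := hEclosed.csInf_mem hEne hEbdd
  set t0 := sInf E with ht0
  have ht00 : 0 ≤ t0 := ht0E.1
  have ht0ρ : ρ ≤ ‖χ t0 - (d2*y^2, y)‖ := ht0E.2
  have h0ρ : ‖χ 0 - (d2*y^2, y)‖ < ρ := lt_of_lt_of_le h0 (by linarith)
  have ht0pos : 0 < t0 := by
    rcases lt_or_eq_of_le ht00 with h|h
    · exact h
    · exfalso; rw [← h] at ht0ρ; linarith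
  have hpre : ∀ s, 0 ≤ s → s < t0 → ‖χ s - (d2*y^2, y)‖ < ρ := by
    intro s hs hst
    by_contra hb; push_neg at hb
    exact absurd (csInf_le hEbdd ⟨hs, hb⟩) (not_le.mpr hst)
  have hle : ‖χ t0 - (d2*y^2, y)‖ ≤ ρ := by
    have hten : Filter.Tendsto (fun s => ‖χ s - (d2*y^2, y)‖) (nhdsWithin t0 (Iio t0))
        (nhds ‖χ t0 - (d2*y^2, y)‖) :=
      (((hχ t0 ht00).1.continuousAt.sub continuousAt_const).norm).continuousWithinAt
    have hne : (nhdsWithin t0 (Iio t0)).NeBot := nhdsLT_neBot t0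
    apply le_of_tendsto hten
    filter_upwards [Ioo_mem_nhdsLT ht0pos] with s hs
    exact (hpre s hs.1.le hs.2).le
  have hsnorm : ∀ s ∈ Icc 0 t0, ‖χ s - (d2*y^2, y)‖ ≤ ρ := by
    intro s hs
    rcases eq_or_lt_of_le hs.2 with he|hl
    · rw [he]; exact hle
    · exact (hpre s hs.1 hl).le
  have hstrip : ∀ s ∈ Icc 0 t0, y/2 ≤ (χ s).2 ∧ (χ s).2 ≤ 2*y := by
    intro s hs
    have h2 := (prod_comp_le (χ s - (d2*y^2, y))).2
    have he : (χ s - (d2*y^2, y)).2 = (χ s).2 - y := rfl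
    rw [he] at h2
    have := abs_le.mp (le_trans h2 (hsnorm s hs))
    constructor <;> [linarith [this.1]; linarith [this.2]]
  have hWanti : AntitoneOn (fun s => Wfun d2 y α (χ s)) (Icc 0 t0) := by
    apply antiOn hy hα0 hα1 (convex_Icc 0 t0) (f' := fun s => DWfun d2 y α (χ s))
    · intro s hs
      have hd := hasDerivAt_W_comp hd2 hy hα0 hα1 χ s _ (hχ s hs.1).1 (hχ s hs.1).2
      convert hd using 1
      rfl
    · intro s hs
      have hDle := DWfun_le hd2 hy hα0 hα1 (χ s) (hstrip s hs).1 (hstrip s hs).2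
      have hW0 : 0 ≤ Wfun d2 y α (χ s) := by
        have := (W_bounds hd2 hy hα0 hα1 ((χ s).1 - d2*y^2) ((χ s).2)
          (hstrip s hs).1 (hstrip s hs).2).1
        rw [Wfun]
        nlinarith [sq_nonneg ((χ s).1 - d2*y^2), sq_nonneg ((χ s).2 - y)]
      nlinarith
  -- contradiction via W values
  have hstrip0 : y/2 ≤ (χ 0).2 ∧ (χ 0).2 ≤ 2*y := hstrip 0 ⟨le_refl 0, ht00⟩
  have hW00 : Wfun d2 y α (χ 0) < ρ^2/4 := by
    have hup := (W_bounds hd2 hy hα0 hα1 ((χ 0).1 - d2*y^2) ((χ 0).2)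
      hstrip0.1 hstrip0.2).2
    have h1 := (prod_comp_le (χ 0 - (d2*y^2, y))).1
    have h2 := (prod_comp_le (χ 0 - (d2*y^2, y))).2
    have he1 : (χ 0 - (d2*y^2, y)).1 = (χ 0).1 - d2*y^2 := rfl
    have he2 : (χ 0 - (d2*y^2, y)).2 = (χ 0).2 - y := rfl
    rw [he1] at h1; rw [he2] at h2
    have hn0 : 0 ≤ ‖χ 0 - (d2*y^2, y)‖ := norm_nonneg _
    have hsq : ((χ 0).1 - d2*y^2)^2 + ((χ 0).2 - y)^2 ≤ 2*(ρ/10)^2 := by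
      nlinarith [sq_abs ((χ 0).1 - d2*y^2), sq_abs ((χ 0).2 - y),
        mul_self_le_mul_self (abs_nonneg ((χ 0).1 - d2*y^2)) (le_of_lt (lt_of_le_of_lt h1 h0)),
        mul_self_le_mul_self (abs_nonneg ((χ 0).2 - y)) (le_of_lt (lt_of_le_of_lt h2 h0))]
    rw [Wfun]
    nlinarith
  have hWt0 : ρ^2/4 ≤ Wfun d2 y α (χ t0) := by
    have hstript0 := hstrip t0 ⟨ht00, le_refl t0⟩
    have hlo := (W_bounds hd2 hy hα0 hα1 ((χ t0).1 - d2*y^2) ((χ t0).2)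
      hstript0.1 hstript0.2).1
    have hsq := prod_norm_sq_le (χ t0 - (d2*y^2, y))
    have he1 : (χ t0 - (d2*y^2, y)).1 = (χ t0).1 - d2*y^2 := rfl
    have he2 : (χ t0 - (d2*y^2, y)).2 = (χ t0).2 - y := rfl
    rw [he1, he2] at hsq
    have hρ2 : ρ^2 ≤ ‖χ t0 - (d2*y^2, y)‖^2 := by
      nlinarith [mul_self_le_mul_self hρ0.le ht0ρ]
    rw [Wfun]
    nlinarith
  have := hWanti (show (0:ℝ) ∈ Icc 0 t0 from ⟨le_refl 0, ht00⟩)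
    (show t0 ∈ Icc 0 t0 from ⟨ht00, le_refl t0⟩) ht00
  simp only at this
  linarith

/-- convergence lemma -/
lemma converge (χ : ℝ → ℝ × ℝ)
    (hχ : ∀ τ : ℝ, 0 ≤ τ → HasDerivAt χ (1 - (χ τ).2 * uu y α (χ τ).2,
        -d2*(χ τ).2 + (χ τ).1 * uu y α (χ τ).2) τ ∧ 0 < (χ τ).2)
    (h0 : ‖χ 0 - (d2*y^2, y)‖ < y/20) :
    Filter.Tendsto χ Filter.atTop (nhds (d2*y^2, y)) := by
  have hlam := lam_pos hd2 hy hα0 hα1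
  have htrap := trap hd2 hy hα0 hα1 χ hχ (show (0:ℝ) < y/2 by linarith) (le_refl (y/2))
    (by rw [show y/2/10 = y/20 by ring]; exact h0)
  have hstrip : ∀ τ : ℝ, 0 ≤ τ → y/2 ≤ (χ τ).2 ∧ (χ τ).2 ≤ 2*y := by
    intro τ hτ
    have h2 := (prod_comp_le (χ τ - (d2*y^2, y))).2
    have he : (χ τ - (d2*y^2, y)).2 = (χ τ).2 - y := rfl
    rw [he] at h2
    have := abs_le.mp (le_trans h2 (htrap τ hτ).le)
    constructor <;> [linarith [this.1]; linarith [this.2]]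
  have hWderiv : ∀ τ : ℝ, 0 ≤ τ →
      HasDerivAt (fun t => Wfun d2 y α (χ t)) (DWfun d2 y α (χ τ)) τ := by
    intro τ hτ
    have hd := hasDerivAt_W_comp hd2 hy hα0 hα1 χ τ _ (hχ τ hτ).1 (hχ τ hτ).2
    convert hd using 1
    rfl
  have hWnn : ∀ τ : ℝ, 0 ≤ τ → 0 ≤ Wfun d2 y α (χ τ) := by
    intro τ hτ
    have := (W_bounds hd2 hy hα0 hα1 ((χ τ).1 - d2*y^2) ((χ τ).2)
      (hstrip τ hτ).1 (hstrip τ hτ).2).1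
    rw [Wfun]
    nlinarith [sq_nonneg ((χ τ).1 - d2*y^2), sq_nonneg ((χ τ).2 - y)]
  have hanti : AntitoneOn (fun τ => Wfun d2 y α (χ τ) * Real.exp (lam d2 y α * τ)) (Ici 0) := by
    apply antiOn hy hα0 hα1 (convex_Ici 0)
      (f' := fun τ => DWfun d2 y α (χ τ) * Real.exp (lam d2 y α * τ)
        + Wfun d2 y α (χ τ) * (Real.exp (lam d2 y α * τ) * lam d2 y α))
    · intro τ hτ
      have hE : HasDerivAt (fun τ : ℝ => Real.exp (lam d2 y α * τ))
          (Real.exp (lam d2 y α * τ) * lam d2 y α) τ := by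
        have := ((hasDerivAt_id τ).const_mul (lam d2 y α)).exp
        exact this.congr_deriv (by simp only [id_eq]; ring)
      exact (hWderiv τ hτ).mul hE
    · intro τ hτ
      have hDle := DWfun_le hd2 hy hα0 hα1 (χ τ) (hstrip τ hτ).1 (hstrip τ hτ).2
      have hW0 := hWnn τ hτ
      have hEpos : 0 < Real.exp (lam d2 y α * τ) := Real.exp_pos _
      nlinarith
  have hdecay : ∀ τ : ℝ, 0 ≤ τ →
      Wfun d2 y α (χ τ) ≤ Wfun d2 y α (χ 0) * Real.exp (-(lam d2 y α * τ)) := by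
    intro τ hτ
    have := hanti (self_mem_Ici) (mem_Ici.mpr hτ) hτ
    simp only [mul_zero, Real.exp_zero, mul_one] at this
    have hEpos : 0 < Real.exp (lam d2 y α * τ) := Real.exp_pos _
    rw [Real.exp_neg, ← div_eq_mul_inv, le_div_iff₀ hEpos]
    linarith [this]
  -- squeeze
  rw [tendsto_iff_dist_tendsto_zero]
  have hW0nn : 0 ≤ Wfun d2 y α (χ 0) := hWnn 0 (le_refl 0)
  apply squeeze_zero' (f := fun τ => dist (χ τ) (d2*y^2, y))
    (g := fun τ => Real.sqrt (4 * Wfun d2 y α (χ 0) * Real.exp (-(lam d2 y α * τ))))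
  · exact Filter.Eventually.of_forall (fun τ => dist_nonneg)
  · filter_upwards [Filter.eventually_ge_atTop (0:ℝ)] with τ hτ
    have hlo := (W_bounds hd2 hy hα0 hα1 ((χ τ).1 - d2*y^2) ((χ τ).2)
      (hstrip τ hτ).1 (hstrip τ hτ).2).1
    have hsq := prod_norm_sq_le (χ τ - (d2*y^2, y))
    have he1 : (χ τ - (d2*y^2, y)).1 = (χ τ).1 - d2*y^2 := rfl
    have he2 : (χ τ - (d2*y^2, y)).2 = (χ τ).2 - y := rfl
    rw [he1, he2] at hsq
    have hd : dist (χ τ) (d2*y^2, y) = ‖χ τ - (d2*y^2, y)‖ := dist_eq_norm _ _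
    have hkey : dist (χ τ) (d2*y^2, y)^2 ≤ 4 * Wfun d2 y α (χ 0) * Real.exp (-(lam d2 y α * τ)) := by
      rw [hd]
      have h1 : ‖χ τ - (d2*y^2, y)‖^2 ≤ 4 * Wfun d2 y α (χ τ) := by
        rw [Wfun]; nlinarith
      linarith [hdecay τ hτ]
    calc dist (χ τ) (d2*y^2, y) = Real.sqrt (dist (χ τ) (d2*y^2, y)^2) :=
          (Real.sqrt_sq dist_nonneg).symm
      _ ≤ Real.sqrt (4 * Wfun d2 y α (χ 0) * Real.exp (-(lam d2 y α * τ))) :=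
          Real.sqrt_le_sqrt hkey
  · have h1 : Filter.Tendsto (fun τ : ℝ => lam d2 y α * τ) Filter.atTop Filter.atTop :=
      Filter.Tendsto.const_mul_atTop hlam Filter.tendsto_id
    have h2 : Filter.Tendsto (fun τ : ℝ => Real.exp (-(lam d2 y α * τ)))
        Filter.atTop (nhds 0) := by
      simp only [Real.exp_neg]
      exact (Real.tendsto_exp_atTop.comp h1).inv_tendsto_atTop
    have h3 : Filter.Tendsto (fun τ : ℝ => 4 * Wfun d2 y α (χ 0) * Real.exp (-(lam d2 y α * τ)))
        Filter.atTop (nhds 0) := by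
      have := h2.const_mul (4 * Wfun d2 y α (χ 0))
      simpa using this
    have h4 := (Real.continuous_sqrt.tendsto 0).comp h3
    simpa [Real.sqrt_zero, Function.comp_def] using h4


end ODE

end
end BoostIDA

/-- asymptotic stability of the desired equilibrium for the IDA-PBC
u = (1/y⋆)·(x2/y⋆)^α, α ∈ (0,1), on the half-plane x2 > 0, with d1 = 0. -/
theorem boost_ida_pbc_rodriguez_stable
    (d2 ystar α : ℝ) (hd2 : 0 < d2) (hy : 0 < ystar)
    (hα : α ∈ Set.Ioo (0 : ℝ) 1)
    (u : ℝ → ℝ)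
    (hu : ∀ x2 : ℝ, u x2 = (1 / ystar) * (x2 / ystar) ^ α)
    (f : ℝ × ℝ → ℝ × ℝ)
    (hf : ∀ x : ℝ × ℝ, f x = (1 - x.2 * u x.2, -d2 * x.2 + x.1 * u x.2))
    (xstar : ℝ × ℝ) (hxstar : xstar = (d2 * ystar ^ 2, ystar)) :
    f xstar = 0 ∧
    (∀ ε > (0 : ℝ), ∃ δ > (0 : ℝ), ∀ χ : ℝ → ℝ × ℝ,
      (∀ τ : ℝ, 0 ≤ τ → HasDerivAt χ (f (χ τ)) τ ∧ 0 < (χ τ).2) →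
      ‖χ 0 - xstar‖ < δ → ∀ τ : ℝ, 0 ≤ τ → ‖χ τ - xstar‖ < ε) ∧
    (∃ δ > (0 : ℝ), ∀ χ : ℝ → ℝ × ℝ,
      (∀ τ : ℝ, 0 ≤ τ → HasDerivAt χ (f (χ τ)) τ ∧ 0 < (χ τ).2) →
      ‖χ 0 - xstar‖ < δ →
      Filter.Tendsto χ Filter.atTop (nhds xstar)) := by
  obtain ⟨hα0, hα1⟩ := hα
  -- conversion of solutions to normalized form
  have hconv : ∀ χ : ℝ → ℝ × ℝ,
      (∀ τ : ℝ, 0 ≤ τ → HasDerivAt χ (f (χ τ)) τ ∧ 0 < (χ τ).2) →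
      (∀ τ : ℝ, 0 ≤ τ → HasDerivAt χ
        (1 - (χ τ).2 * BoostIDA.uu ystar α (χ τ).2,
          -d2*(χ τ).2 + (χ τ).1 * BoostIDA.uu ystar α (χ τ).2) τ ∧ 0 < (χ τ).2) := by
    intro χ hsol t ht
    obtain ⟨hd, hp⟩ := hsol t ht
    refine ⟨?_, hp⟩
    have hueq : u (χ t).2 = BoostIDA.uu ystar α (χ t).2 := by
      rw [hu, BoostIDA.uu_eq hy hα0 hα1 hp]
    rw [hf, hueq] at hd
    exact hd
  refine ⟨?_, ?_, ?_⟩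
  · -- equilibrium
    rw [hxstar, hf]
    have hu1 : u ystar = 1/ystar := by
      rw [hu, div_self (ne_of_gt hy), Real.one_rpow, mul_one]
    have h2 : ((d2 * ystar ^ 2, ystar) : ℝ × ℝ).2 = ystar := rfl
    have h1 : ((d2 * ystar ^ 2, ystar) : ℝ × ℝ).1 = d2 * ystar ^ 2 := rfl
    rw [h1, h2, hu1]
    have : ((1 - ystar * (1/ystar), -d2 * ystar + d2 * ystar ^ 2 * (1/ystar)) : ℝ × ℝ)
        = ((0 : ℝ), (0 : ℝ)) := by
      rw [Prod.mk.injEq]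
      constructor
      · rw [mul_one_div_cancel (ne_of_gt hy), sub_self]
      · field_simp; ring
    rw [this]
    rfl
  · -- stability
    intro ε hε
    refine ⟨min (ystar/2) (ε/2)/10, by positivity, ?_⟩
    intro χ hsol hnear τ hτ
    rw [hxstar] at hnear ⊢
    have htrap := BoostIDA.trap hd2 hy hα0 hα1 χ (hconv χ hsol)
      (lt_min (by linarith) (by linarith)) (min_le_left _ _) hnear
    calc ‖χ τ - (d2 * ystar ^ 2, ystar)‖ < min (ystar/2) (ε/2) := htrap τ hτ
      _ ≤ ε/2 := min_le_right _ _
      _ < ε := by linarith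
  · -- attractivity
    refine ⟨ystar/20, by positivity, ?_⟩
    intro χ hsol hnear
    rw [hxstar] at hnear ⊢
    exact BoostIDA.converge hd2 hy hα0 hα1 χ (hconv χ hsol) hnear
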